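/- Let d ≥ 3, q ≥ (5d)^5 be integers and β ≥ β_c. With t ≥ (q−1)^{2/d} defined from e^β−1 = (t−1)(t^{d−1}+q−1)/(t^{d−1}−t), φ̂₁ = t^{−(d−2)}, and R = (t^{d+1}+(q−2)t^d−(q−1)t)/((t^d−t)(t^{d−1}+q−1)), it holds that √φ̂₁ + R < 1/(d−1)^5. -/

import Mathlib

lemma auxL (k : ℕ) : 21 ^ (k + 4) * (k + 3) ^ 10 ≤ 3125 ^ (k + 2) * 10 ^ (k + 4) := by
  induction k with
  | zero => norm_num
  | succ k ih =>
      calc 21 ^ (k + 1 + 4) * (k + 1 + 3) ^ 10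
          ≤ 21 * (21 ^ (k + 4) * (2 * (k + 3)) ^ 10) := by
            rw [show k+1+4 = (k+4)+1 by omega, pow_succ]
            have h : k + 1 + 3 ≤ 2 * (k + 3) := by omega
            calc 21 ^ (k+4) * 21 * (k+1+3)^10 ≤ 21 ^ (k+4) * 21 * (2*(k+3))^10 := by
                  gcongr
              _ = 21 * (21 ^ (k + 4) * (2 * (k + 3)) ^ 10) := by ring
        _ = 21 * 2 ^ 10 * (21 ^ (k + 4) * (k + 3) ^ 10) := by ring
        _ ≤ 21 * 2 ^ 10 * (3125 ^ (k + 2) * 10 ^ (k + 4)) := by gcongr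
        _ ≤ 3125 ^ (k + 1 + 2) * 10 ^ (k + 1 + 4) := by
            rw [show k+1+2 = (k+2)+1 by omega, show k+1+4 = (k+4)+1 by omega,
              pow_succ, pow_succ]
            calc 21 * 2 ^ 10 * (3125 ^ (k + 2) * 10 ^ (k + 4))
                = 21504 * (3125 ^ (k + 2) * 10 ^ (k + 4)) := by norm_num
              _ ≤ 31250 * (3125 ^ (k + 2) * 10 ^ (k + 4)) := by gcongr <;> norm_num
              _ = 3125 ^ (k + 2) * 3125 * (10 ^ (k + 4) * 10) := by ring

-- real version of the key inequality
lemma auxK (m q : ℕ) (hq : (5 * (m + 3)) ^ 5 ≤ q) :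
    (21/10 : ℝ) ^ (m + 3) * ((m : ℝ) + 2) ^ (5 * (m + 3)) ≤ ((q : ℝ) - 1) ^ (m + 1) := by
  have hQnat : ((5 * (m + 2)) ^ 5 : ℕ) + 1 ≤ q := by
    have : (5 * (m + 2)) ^ 5 < (5 * (m + 3)) ^ 5 :=
      Nat.pow_lt_pow_left (by omega) (by norm_num)
    omega
  have hQ5 : ((5 * ((m:ℝ) + 2)) ^ 5 : ℝ) ≤ (q : ℝ) - 1 := by
    have := (Nat.cast_le (α := ℝ)).mpr hQnat
    push_cast at this ⊢
    linarith
  have hQpos : (0:ℝ) ≤ (q:ℝ) - 1 := le_trans (by positivity) hQ5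
  cases m with
  | zero =>
      have hq15 : (759375 : ℝ) ≤ (q:ℝ) := by
        have : (759375 : ℕ) ≤ q := by norm_num at hq; omega
        exact_mod_cast this
      calc (21/10 : ℝ) ^ (0 + 3) * (((0:ℕ) : ℝ) + 2) ^ (5 * (0 + 3))
          ≤ ((q:ℝ) - 1) ^ 1 := by rw [pow_one]; norm_num; linarith
        _ = ((q:ℝ) - 1) ^ (0 + 1) := by norm_num
  | succ k =>
      have h1 : (21/10 : ℝ) ^ (k + 4) * ((k:ℝ) + 3) ^ 10 ≤ (3125:ℝ) ^ (k + 2) := by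
        rw [div_pow, div_mul_eq_mul_div, div_le_iff₀ (by positivity)]
        calc (21:ℝ) ^ (k + 4) * ((k:ℝ) + 3) ^ 10 = (((21 ^ (k+4) * (k+3)^10 : ℕ)) : ℝ) := by
              push_cast; ring
          _ ≤ (((3125 ^ (k + 2) * 10 ^ (k + 4) : ℕ)) : ℝ) := by
              exact_mod_cast auxL k
          _ = (3125:ℝ) ^ (k + 2) * 10 ^ (k + 4) := by push_cast; ring
      push_cast at hQ5
      calc (21/10 : ℝ) ^ (k + 1 + 3) * (((k+1:ℕ):ℝ) + 2) ^ (5 * (k + 1 + 3))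
          = (21/10 : ℝ) ^ (k + 1 + 3) * ((k:ℝ) + 1 + 2) ^ (5 * (k + 1 + 3)) := by push_cast; ring
        _
          = ((21/10 : ℝ) ^ (k + 4) * ((k:ℝ) + 3) ^ 10) * ((k:ℝ) + 3) ^ (5 * (k + 2)) := by
            rw [show 5 * (k+1+3) = 10 + 5 * (k+2) by omega, pow_add]
            ring
        _ ≤ (3125:ℝ) ^ (k + 2) * ((k:ℝ) + 3) ^ (5 * (k + 2)) := by
            gcongr
        _ = ((5 * ((k:ℝ) + 1 + 2)) ^ 5) ^ (k + 2) := by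
            have hb : ((k:ℝ) + 1 + 2) = (k:ℝ) + 3 := by ring
            calc (3125:ℝ) ^ (k + 2) * ((k:ℝ) + 3) ^ (5 * (k + 2))
                = ((5:ℝ)^5) ^ (k+2) * (((k:ℝ) + 3) ^ 5) ^ (k + 2) := by
                  rw [← pow_mul ((k:ℝ)+3) 5 (k+2)]; norm_num
              _ = ((5 * ((k:ℝ) + 1 + 2)) ^ 5) ^ (k + 2) := by
                  rw [hb, ← mul_pow, ← mul_pow]
        _ ≤ ((q : ℝ) - 1) ^ (k + 1 + 1) := by
            have h2 : (0:ℝ) ≤ (5 * ((k:ℝ) + 1 + 2)) ^ 5 := by positivity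
            exact pow_le_pow_left₀ h2 hQ5 (k + 2)

/-- For `d ≥ 3`, `q ≥ (5d)^5` and `β ≥ β_c`, with `t ≥ (q−1)^{2/d}` defined from
`e^β − 1 = (t−1)(t^{d−1}+q−1)/(t^{d−1}−t)`, `φ̂₁ = t^{−(d−2)}` and
`R = (t^{d+1}+(q−2)t^d−(q−1)t)/((t^d−t)(t^{d−1}+q−1))`, it holds that
`√φ̂₁ + R < 1/(d−1)^5`. -/
theorem stmt_9 (d q : ℕ) (hd : 3 ≤ d) (hq : (5 * d) ^ 5 ≤ q) (β t : ℝ)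
    (hβ : Real.log (((q : ℝ) - 2) / (((q : ℝ) - 1) ^ ((1 : ℝ) - 2 / (d : ℝ)) - 1)) ≤ β)
    (ht : ((q : ℝ) - 1) ^ ((2 : ℝ) / (d : ℝ)) ≤ t)
    (hβt : Real.exp β - 1 = (t - 1) * (t ^ (d - 1) + (q : ℝ) - 1) / (t ^ (d - 1) - t)) :
    Real.sqrt ((t ^ (d - 2))⁻¹) +
        (t ^ (d + 1) + ((q : ℝ) - 2) * t ^ d - ((q : ℝ) - 1) * t) /
          ((t ^ d - t) * (t ^ (d - 1) + (q : ℝ) - 1)) <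
      1 / ((d : ℝ) - 1) ^ 5 := by
  clear hβ hβt
  obtain ⟨m, rfl⟩ : ∃ m, d = m + 3 := ⟨d - 3, by omega⟩
  clear hd
  have hqn : (759375 : ℕ) ≤ q := by
    have h15 : (15:ℕ) ^ 5 ≤ (5 * (m + 3)) ^ 5 := Nat.pow_le_pow_left (by omega) 5
    calc (759375:ℕ) = 15 ^ 5 := by norm_num
      _ ≤ q := h15.trans hq
  set Q : ℝ := (q : ℝ) - 1 with hQdef
  have hQ : (759374 : ℝ) ≤ Q := by
    have : (759375 : ℝ) ≤ (q : ℝ) := by exact_mod_cast hqn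
    simp only [hQdef]; linarith
  have hQ0 : (0:ℝ) < Q := by linarith
  have h1Q : (1:ℝ) < Q := by linarith
  have hdr : ((m + 3 : ℕ) : ℝ) = (m : ℝ) + 3 := by push_cast; ring
  set u : ℝ := Q ^ (((m : ℝ) + 3))⁻¹ with hudef
  have hu1 : 1 < u := by
    have h := Real.rpow_lt_rpow_of_exponent_lt h1Q
      (show (0:ℝ) < (((m:ℝ) + 3))⁻¹ by positivity)
    rw [Real.rpow_zero] at h
    exact h
  have hu0 : 0 < u := lt_trans one_pos hu1
  have hv0 : 0 < u ^ (m + 1) := by positivity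
  have hud : u ^ (m + 3) = Q := by
    rw [hudef, ← Real.rpow_natCast (Q ^ (((m : ℝ) + 3))⁻¹) (m + 3), ← Real.rpow_mul hQ0.le]
    rw [hdr, inv_mul_cancel₀ (by positivity)]
    exact Real.rpow_one Q
  have ht2 : u ^ 2 ≤ t := by
    have heq : Q ^ ((2:ℝ) / ((m+3:ℕ) : ℝ)) = u ^ 2 := by
      rw [hudef, ← Real.rpow_natCast (Q ^ (((m : ℝ) + 3))⁻¹) 2, ← Real.rpow_mul hQ0.le, hdr]
      norm_num
      rw [div_eq_mul_inv, mul_comm]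
    rw [← heq]
    exact ht
  have ht1 : 1 < t := lt_of_lt_of_le (one_lt_pow₀ hu1 two_ne_zero) ht2
  have ht0 : 0 < t := lt_trans one_pos ht1
  set x : ℝ := (u ^ (m + 1))⁻¹ with hxdef
  have hx0 : 0 < x := by rw [hxdef]; positivity
  have hxv : x * u ^ (m + 1) = 1 := by rw [hxdef]; exact inv_mul_cancel₀ hv0.ne'
  set A : ℝ := t ^ (m + 2) with hAdef
  have hA759 : (759374 : ℝ) ≤ A := by
    calc (759374:ℝ) ≤ Q := hQ
      _ = u ^ (m + 3) := hud.symm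
      _ ≤ u ^ (2 * (m + 2)) := pow_le_pow_right₀ hu1.le (by omega)
      _ = (u ^ 2) ^ (m + 2) := by rw [← pow_mul]
      _ ≤ t ^ (m + 2) := pow_le_pow_left₀ (by positivity) ht2 (m + 2)
  have hA1 : (1:ℝ) < A := by linarith
  clear_value x u A Q
  -- f1 : t ≤ x^2 * A
  have hpowt : (u ^ 2) ^ (m + 1) ≤ t ^ (m + 1) := pow_le_pow_left₀ (by positivity) ht2 (m + 1)
  have f1 : t ≤ x ^ 2 * A := by
    have hAt : t * (u ^ (m + 1)) ^ 2 ≤ A := by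
      calc t * (u ^ (m + 1)) ^ 2 = t * (u ^ 2) ^ (m + 1) := by
            rw [← pow_mul, ← pow_mul, Nat.mul_comm]
        _ ≤ t * t ^ (m + 1) := by gcongr
        _ = A := by rw [hAdef]; ring
    calc t = t * (x * u ^ (m + 1)) ^ 2 := by rw [hxv]; ring
      _ = x ^ 2 * (t * (u ^ (m + 1)) ^ 2) := by ring
      _ ≤ x ^ 2 * A := by gcongr
  -- f2 : Q ≤ x * A
  have f2 : Q ≤ x * A := by
    have hA2 : Q * u ^ (m + 1) ≤ A := by
      calc Q * u ^ (m + 1) = u ^ (m + 3) * u ^ (m + 1) := by rw [hud]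
        _ = u ^ (2 * (m + 2)) := by rw [← pow_add]; congr 1; omega
        _ = (u ^ 2) ^ (m + 2) := by rw [← pow_mul]
        _ ≤ A := by
            rw [hAdef]
            exact pow_le_pow_left₀ (by positivity) ht2 (m + 2)
    calc Q = x * (Q * u ^ (m + 1)) := by
          rw [show x * (Q * u ^ (m+1)) = Q * (x * u ^ (m+1)) by ring, hxv]; ring
      _ ≤ x * A := by gcongr
  -- term1 bound
  have term1 : Real.sqrt ((t ^ (m + 1))⁻¹) ≤ x := by
    have hinv : (t ^ (m + 1))⁻¹ ≤ x ^ 2 := by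
      have : (u ^ 2) ^ (m + 1) ≤ t ^ (m + 1) := hpowt
      have h2 : (t ^ (m + 1))⁻¹ ≤ ((u ^ 2) ^ (m + 1))⁻¹ :=
        inv_anti₀ (by positivity) this
      have h3 : ((u ^ 2) ^ (m + 1)) = (u ^ (m + 1)) ^ 2 := by
        rw [← pow_mul, ← pow_mul, Nat.mul_comm]
      calc (t ^ (m + 1))⁻¹ ≤ ((u ^ 2) ^ (m + 1))⁻¹ := h2
        _ = x ^ 2 := by rw [h3, hxdef]; exact (inv_pow _ _).symm
    calc Real.sqrt ((t ^ (m + 1))⁻¹) ≤ Real.sqrt (x ^ 2) := Real.sqrt_le_sqrt hinv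
      _ = x := Real.sqrt_sq hx0.le
  -- R bound
  set κ : ℝ := 759374 / 759373 with hκdef
  clear_value κ
  have hAκ : A ≤ κ * (A - 1) := by
    rw [hκdef, div_mul_eq_mul_div, le_div_iff₀ (by norm_num : (0:ℝ) < 759373)]
    linarith
  have hR : (t ^ (m + 4) + ((q : ℝ) - 2) * t ^ (m + 3) - Q * t) /
      ((t ^ (m + 3) - t) * (A + Q)) ≤ κ * (x ^ 2 + x) := by
    have hD0 : (0:ℝ) < (t ^ (m + 3) - t) * (A + Q) := by
      have h3 : t < t ^ (m + 3) := by
        calc t = t ^ 1 := (pow_one t).symm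
          _ < t ^ (m + 3) := pow_lt_pow_right₀ ht1 (by omega)
      exact mul_pos (by linarith) (by linarith)
    rw [div_le_iff₀ hD0]
    have hq2 : ((q:ℝ) - 2) = Q - 1 := by rw [hQdef]; ring
    rw [hq2]
    -- numerator ≤ t * A * (t + Q)
    have hN : t ^ (m + 4) + (Q - 1) * t ^ (m + 3) - Q * t ≤ t * A * (t + Q) := by
      have : t * A * (t + Q) - (t ^ (m + 4) + (Q - 1) * t ^ (m + 3) - Q * t)
          = t ^ (m + 3) + Q * t := by rw [hAdef]; ring
      nlinarith [pow_pos ht0 (m + 3)]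
    have hmid : t + Q ≤ (x ^ 2 + x) * (A + Q) := by
      have h4 : (0:ℝ) ≤ (x ^ 2 + x) * Q := by positivity
      nlinarith
    have hfin : t * A * (t + Q) ≤ κ * (x ^ 2 + x) * ((t ^ (m + 3) - t) * (A + Q)) := by
      have hsplit : t ^ (m + 3) - t = t * (A - 1) := by rw [hAdef]; ring
      rw [hsplit]
      have hAQ0 : (0:ℝ) ≤ A + Q := by linarith
      calc t * A * (t + Q) ≤ t * (κ * (A - 1)) * ((x ^ 2 + x) * (A + Q)) := by
            rw [show t * (κ * (A-1)) * ((x^2+x) * (A+Q)) = (t * ((x^2+x) * (A+Q))) * (κ * (A-1)) by ring,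
              show t * A * (t + Q) = (t * (t + Q)) * A by ring]
            apply mul_le_mul
            · gcongr
            · exact hAκ
            · linarith
            · positivity
        _ = κ * (x ^ 2 + x) * (t * (A - 1) * (A + Q)) := by ring
    linarith
  -- numeric final step
  have hdcast : ((m + 3 : ℕ) : ℝ) - 1 = (m : ℝ) + 2 := by push_cast; ring
  have h21 : (21/10 : ℝ) * ((m : ℝ) + 2) ^ 5 ≤ x⁻¹ := by
    have hxinv : x⁻¹ = u ^ (m + 1) := by rw [hxdef, inv_inv]
    have hpow : ((21/10 : ℝ) * ((m : ℝ) + 2) ^ 5) ^ (m + 3) ≤ (x⁻¹) ^ (m + 3) := by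
      rw [hxinv, ← pow_mul, show (m + 1) * (m + 3) = (m + 3) * (m + 1) by ring, pow_mul, hud]
      calc ((21/10 : ℝ) * ((m : ℝ) + 2) ^ 5) ^ (m + 3)
          = (21/10 : ℝ) ^ (m + 3) * ((m : ℝ) + 2) ^ (5 * (m + 3)) := by
            rw [mul_pow, ← pow_mul, Nat.mul_comm 5 (m+3)]
        _ ≤ Q ^ (m + 1) := by rw [hQdef]; exact auxK m q hq
    exact le_of_pow_le_pow_left₀ (by omega) (inv_pos.mpr hx0).le hpow
  have hd32 : (32:ℝ) ≤ ((m:ℝ) + 2) ^ 5 := by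
    have : (2:ℝ) ≤ (m:ℝ) + 2 := by
      have := Nat.cast_nonneg (α := ℝ) m
      linarith
    calc (32:ℝ) = 2 ^ 5 := by norm_num
      _ ≤ ((m:ℝ) + 2) ^ 5 := by gcongr
  have hx67 : x ≤ 1 / 67 := by
    have h672 : (67:ℝ) ≤ x⁻¹ := by
      have hm : (21/10:ℝ) * 32 ≤ (21/10) * ((m:ℝ) + 2) ^ 5 := by linarith
      linarith
    rw [le_div_iff₀ (by norm_num : (0:ℝ) < 67)]
    calc x * 67 ≤ x * x⁻¹ := by gcongr
      _ = 1 := mul_inv_cancel₀ hx0.ne'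
  have h21x : (21/10 : ℝ) * x ≤ 1 / ((m:ℝ) + 2) ^ 5 := by
    rw [le_div_iff₀ (by positivity)]
    calc (21/10:ℝ) * x * ((m:ℝ)+2)^5 = x * ((21/10) * ((m:ℝ)+2)^5) := by ring
      _ ≤ x * x⁻¹ := by gcongr
      _ = 1 := mul_inv_cancel₀ hx0.ne'
  have hsum : x + κ * (x ^ 2 + x) < (21/10) * x := by
    have hx2 : x ^ 2 ≤ x * (1/67) := by
      have := mul_le_mul_of_nonneg_left hx67 hx0.le
      calc x ^ 2 = x * x := sq x
        _ ≤ x * (1/67) := this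
    rw [hκdef]
    linarith
  -- assemble
  have e1 : m + 3 - 1 = m + 2 := rfl
  have hrw1 : t ^ (m + 3 - 1) + (q:ℝ) - 1 = A + Q := by rw [hAdef, hQdef, e1]; ring
  rw [hrw1, hdcast]
  have term1' : Real.sqrt ((t ^ (m + 3 - 2))⁻¹) ≤ x := term1
  have hR' : (t ^ (m + 3 + 1) + ((q : ℝ) - 2) * t ^ (m + 3) - Q * t) /
      ((t ^ (m + 3) - t) * (A + Q)) ≤ κ * (x ^ 2 + x) := hR
  calc Real.sqrt ((t ^ (m + 3 - 2))⁻¹) +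
        (t ^ (m + 3 + 1) + ((q : ℝ) - 2) * t ^ (m + 3) - Q * t) /
          ((t ^ (m + 3) - t) * (A + Q))
      ≤ x + κ * (x ^ 2 + x) := add_le_add term1' hR'
    _ < (21/10) * x := hsum
    _ ≤ 1 / ((m:ℝ) + 2) ^ 5 := h21x
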